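/- If $f\in C^1[0,\infty)\cap C^2(0,\infty)$ with $f'(u)>0$, $f''(u)>0$ for $u>0$, and the limit $q_f=\lim_{u\to\infty} f'(u)^2/(f(u)f''(u))$ exists, then the growth rate $p_f=\lim_{u\to\infty} uf'(u)/f(u)$ exists and satisfies $1/p_f+1/q_f=1$ (interpreting $1/p_f=0$ when $q_f=1$). -/

import Mathlib

open Real Filter Set Topology

lemma aux_tendsto_div_id (g : ℝ → ℝ) (c : ℝ)
    (hdiff : ∀ x : ℝ, 0 < x → HasDerivAt g (deriv g x) x)
    (hd : Tendsto (deriv g) atTop (𝓝 c)) :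
    Tendsto (fun u => g u / u) atTop (𝓝 c) := by
  rw [Metric.tendsto_atTop] at hd ⊢
  intro ε hε
  obtain ⟨U₀, hU₀⟩ := hd (ε/3) (by linarith)
  set U : ℝ := max U₀ 1 with hUdef
  have hU1 : (1:ℝ) ≤ U := le_max_right _ _
  have hUpos : (0:ℝ) < U := by linarith
  set K : ℝ := |g U - c * U| with hKdef
  have key : ∀ u, U ≤ u → |g u - c * u - (g U - c * U)| ≤ ε/3 * (u - U) := by
    intro u hu
    have hderivG : ∀ x ∈ Set.Icc U u,
        HasDerivWithinAt (fun y => g y - c * y) (deriv g x - c) (Set.Icc U u) x := by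
      intro x hx
      have h1 : HasDerivAt g (deriv g x) x := hdiff x (lt_of_lt_of_le hUpos hx.1)
      have h2 : HasDerivAt (fun y => c * y) c x := by
        simpa using (hasDerivAt_id x).const_mul c
      exact (h1.sub h2).hasDerivWithinAt
    have hbound : ∀ x ∈ Set.Icc U u, ‖deriv g x - c‖ ≤ ε/3 := by
      intro x hx
      have := hU₀ x (le_trans (le_max_left _ _) hx.1)
      rw [Real.dist_eq] at this
      rw [Real.norm_eq_abs]
      linarith
    have := Convex.norm_image_sub_le_of_norm_hasDerivWithin_le hderivG hbound (convex_Icc U u)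
      (Set.left_mem_Icc.2 hu) (Set.right_mem_Icc.2 hu)
    rw [Real.norm_eq_abs, Real.norm_eq_abs, abs_of_nonneg (by linarith : (0:ℝ) ≤ u - U)] at this
    exact this
  refine ⟨max U (3 * K / ε + 1), fun u hu => ?_⟩
  have huU : U ≤ u := le_trans (le_max_left _ _) hu
  have huK : 3 * K / ε + 1 ≤ u := le_trans (le_max_right _ _) hu
  have hupos : (0:ℝ) < u := lt_of_lt_of_le hUpos huU
  have h1 := key u huU
  have e : g u - c * u = (g u - c * u - (g U - c * U)) + (g U - c * U) := by ring
  have h2 : |g u - c * u| ≤ ε/3 * (u - U) + K := by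
    rw [e]
    exact le_trans (abs_add_le _ _) (by linarith)
  rw [Real.dist_eq]
  have heq : g u / u - c = (g u - c * u) / u := by field_simp
  rw [heq, abs_div, abs_of_pos hupos]
  rw [div_lt_iff₀ hupos]
  have hK0 : 0 ≤ K := abs_nonneg _
  have h3 : 3 * K / ε ≤ u - 1 := by linarith
  have h4 : 3 * K ≤ ε * (u - 1) := by
    rw [div_le_iff₀ hε] at h3
    linarith
  have h5 : ε/3 * (u - U) + K < ε * u := by nlinarith
  linarith

theorem stmt0 (f : ℝ → ℝ) (q : ℝ)
    (hf1 : ContDiffOn ℝ 1 f (Set.Ici 0)) (hf2 : ContDiffOn ℝ 2 f (Set.Ioi 0))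
    (hf0 : f 0 = 0) (hf'0 : deriv f 0 = 0)
    (hf' : ∀ u > (0:ℝ), 0 < deriv f u) (hf'' : ∀ u > (0:ℝ), 0 < deriv (deriv f) u)
    (hq1 : 1 ≤ q)
    (hq : Tendsto (fun u => (deriv f u) ^ 2 / (f u * deriv (deriv f) u)) atTop (𝓝 q)) :
    (q = 1 → Tendsto (fun u => u * deriv f u / f u) atTop atTop) ∧
    (1 < q → ∃ p : ℝ, 1 < p ∧
      Tendsto (fun u => u * deriv f u / f u) atTop (𝓝 p) ∧ 1 / p + 1 / q = 1) := by
  have hq0 : (0:ℝ) < q := by linarith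
  -- f is positive on (0, ∞)
  have hfpos : ∀ u : ℝ, 0 < u → 0 < f u := by
    intro u hu
    have hmono : StrictMonoOn f (Set.Ici 0) := by
      apply strictMonoOn_of_deriv_pos (convex_Ici 0) (hf1.continuousOn)
      intro x hx
      rw [interior_Ici] at hx
      exact hf' x hx
    have := hmono (Set.mem_Ici.2 (le_refl 0))
      (Set.mem_Ici.2 (le_of_lt hu)) hu
    rwa [hf0] at this
  set h : ℝ → ℝ := fun u => f u / deriv f u with hhdef
  -- h has derivative 1 - f f''/f'^2 on (0,∞)
  have hderiv : ∀ u : ℝ, 0 < u →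
      HasDerivAt h (1 - f u * deriv (deriv f) u / (deriv f u)^2) u := by
    intro u hu
    have hfd : DifferentiableAt ℝ f u := differentiableAt_of_deriv_ne_zero (ne_of_gt (hf' u hu))
    have hf'd : DifferentiableAt ℝ (deriv f) u :=
      differentiableAt_of_deriv_ne_zero (ne_of_gt (hf'' u hu))
    have h1 : HasDerivAt f (deriv f u) u := hfd.hasDerivAt
    have h2 : HasDerivAt (deriv f) (deriv (deriv f) u) u := hf'd.hasDerivAt
    have := h1.div h2 (ne_of_gt (hf' u hu))
    have hne : deriv f u ≠ 0 := ne_of_gt (hf' u hu)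
    refine this.congr_deriv ?_
    field_simp
  have hderiveq : ∀ u : ℝ, 0 < u →
      deriv h u = 1 - f u * deriv (deriv f) u / (deriv f u)^2 := fun u hu =>
    (hderiv u hu).deriv
  -- deriv h tends to 1 - 1/q
  have hdh : Tendsto (deriv h) atTop (𝓝 (1 - q⁻¹)) := by
    have h1 : Tendsto (fun u => 1 - ((deriv f u) ^ 2 / (f u * deriv (deriv f) u))⁻¹) atTop
        (𝓝 (1 - q⁻¹)) := tendsto_const_nhds.sub (hq.inv₀ (ne_of_gt hq0))
    apply h1.congr'
    filter_upwards [eventually_gt_atTop (0:ℝ)] with u hu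
    rw [hderiveq u hu, inv_div]
  have hmain : Tendsto (fun u => h u / u) atTop (𝓝 (1 - q⁻¹)) :=
    aux_tendsto_div_id h (1 - q⁻¹) (fun x hx => by
      have := hderiv x hx
      rwa [hderiveq x hx]) hdh
  -- key equality
  have heq : ∀ᶠ u in atTop, (h u / u)⁻¹ = u * deriv f u / f u := by
    filter_upwards [eventually_gt_atTop (0:ℝ)] with u hu
    have h1 : f u ≠ 0 := ne_of_gt (hfpos u hu)
    have h2 : deriv f u ≠ 0 := ne_of_gt (hf' u hu)
    have h3 : u ≠ 0 := ne_of_gt hu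
    simp only [hhdef]
    field_simp
  constructor
  · intro hq1'
    have hc0 : (1:ℝ) - q⁻¹ = 0 := by rw [hq1']; simp
    rw [hc0] at hmain
    have hpos : ∀ᶠ u in atTop, h u / u ∈ Set.Ioi (0:ℝ) := by
      filter_upwards [eventually_gt_atTop (0:ℝ)] with u hu
      exact div_pos (div_pos (hfpos u hu) (hf' u hu)) hu
    have : Tendsto (fun u => h u / u) atTop (𝓝[>] 0) :=
      tendsto_nhdsWithin_iff.2 ⟨hmain, hpos⟩
    have := this.inv_tendsto_nhdsGT_zero
    exact this.congr' heq
  · intro hqgt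
    have hcpos : 0 < 1 - q⁻¹ := by
      have : q⁻¹ < 1 := by
        rw [inv_lt_one_iff₀]; right; exact hqgt
      linarith
    refine ⟨(1 - q⁻¹)⁻¹, ?_, ?_, ?_⟩
    · rw [one_lt_inv_iff₀]
      constructor
      · exact hcpos
      · have : 0 < q⁻¹ := inv_pos.2 hq0
        linarith
    · have := hmain.inv₀ (ne_of_gt hcpos)
      exact this.congr' heq
    · rw [one_div, one_div, inv_inv]
      ring
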